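/- Let k > 2 be an integer and let p be a prime such that either p is odd and p divides k, or p = 2 and 4 divides k. Then for every integer m, the p-adic valuation of Φ_k(m) is at most 1, i.e. p^2 does not divide Φ_k(m). -/

import Mathlib

open Polynomial

private lemma aux_eval_one (p n : ℕ) (hp : p.Prime) (hn : n ≠ 1) {c : ℤ}
    (hc : c ∣ eval 1 (cyclotomic n ℤ)) : ¬ (p : ℤ) ^ 2 ∣ c := by
  intro hd
  have h2 : (p : ℤ) ^ 2 ∣ eval 1 (cyclotomic n ℤ) := hd.trans hc
  have hple : ¬ ((p:ℤ)^2 ∣ (1:ℤ)) := by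
    intro h1
    have := Int.le_of_dvd one_pos h1
    have hp2 := hp.two_le
    push_cast at this
    nlinarith [this]
  rcases eq_or_ne n 0 with rfl | h0
  · rw [cyclotomic_zero, eval_one] at h2
    exact hple h2
  by_cases hpp : IsPrimePow n
  · obtain ⟨q, a, hq, ha, rfl⟩ := hpp
    have hq' : q.Prime := Nat.prime_iff.mpr hq
    obtain ⟨j, rfl⟩ := Nat.exists_eq_succ_of_ne_zero ha.ne'
    haveI := Fact.mk hq'
    rw [eval_one_cyclotomic_prime_pow] at h2
    have hpq : (p:ℤ) ∣ (q:ℤ) := (dvd_pow_self (p:ℤ) two_ne_zero).trans h2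
    rw [Int.natCast_dvd_natCast] at hpq
    have : p = q := ((Nat.prime_dvd_prime_iff_eq hp hq').mp hpq)
    subst this
    have : p ^ 2 ∣ p := by exact_mod_cast h2
    have := Nat.le_of_dvd hp.pos this
    nlinarith [hp.two_le]
  · rw [eval_one_cyclotomic_not_prime_pow (fun {q} hq t ht => ?_)] at h2
    · exact hple h2
    · rcases Nat.eq_zero_or_pos t with rfl | ht0
      · exact hn (by simpa using ht.symm)
      · exact hpp ⟨q, t, Nat.prime_iff.mp hq, ht0, ht⟩

private lemma fermat_not_dvd (p : ℕ) (hp : p.Prime) {a : ℤ} (h : ¬ (p:ℤ) ∣ a - 1) :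
    ¬ (p:ℤ) ∣ a ^ p - 1 := by
  haveI := Fact.mk hp
  rw [← ZMod.intCast_zmod_eq_zero_iff_dvd] at h ⊢
  push_cast at h ⊢
  rwa [ZMod.pow_card]

private lemma emult_pow_sub_one (p : ℕ) (hp : p.Prime) {a : ℤ}
    (hc : Odd p ∨ (p = 2 ∧ IsSquare a)) (hpa : (p:ℤ) ∣ a - 1) :
    emultiplicity (p:ℤ) (a ^ p - 1) = emultiplicity (p:ℤ) (a - 1) + 1 := by
  have hpna : ¬ (p:ℤ) ∣ a := by
    intro hdvd
    have : (p:ℤ) ∣ 1 := by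
      have := dvd_sub hdvd hpa
      simpa using this
    have := Int.le_of_dvd one_pos this
    have := hp.two_le
    omega
  rcases hc with hodd | ⟨rfl, b, rfl⟩
  · have := Int.emultiplicity_pow_sub_pow hp hodd (y := 1) (by simpa using hpa) hpna p
    simp only [one_pow] at this
    rw [this]
    congr 1
    have hfin : FiniteMultiplicity p p := Nat.finiteMultiplicity_iff.mpr ⟨hp.ne_one, hp.pos⟩
    exact hfin.emultiplicity_self
  · -- p = 2, a = b * b
    have hbodd : Odd b := by
      rcases Int.even_or_odd b with he | ho
      · exfalso; apply hpna; push_cast; exact (he.mul_left b).two_dvd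
      · exact ho
    have hb4 : b ^ 2 % 4 = 1 := Int.sq_mod_four_eq_one_of_odd hbodd
    have hbb : b * b = b ^ 2 := by ring
    have hfact : (b*b) ^ 2 - 1 = (b*b - 1) * (b*b + 1) := by ring
    push_cast
    rw [hfact, emultiplicity_mul Int.prime_two]
    congr 1
    rw [show ((1:ℕ∞) = ((1:ℕ):ℕ∞)) from rfl, emultiplicity_eq_coe]
    constructor
    · rw [pow_one, hbb]; omega
    · rw [hbb]; norm_num; omega

private lemma key_lemma (p : ℕ) (hp : p.Prime) (n : ℕ) (hn : 0 < n)
    (hcase : Odd p ∨ (p = 2 ∧ Even n)) (m : ℤ) (hm : m ^ (n * p) ≠ 1) :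
    ¬ (p:ℤ)^2 ∣ eval m (cyclotomic (n * p) ℤ) := by
  intro hsq
  set v := eval m (cyclotomic (n*p) ℤ) with hv
  have hplt : 1 < p := hp.one_lt
  have hprop : n ∈ (n * p).properDivisors :=
    Nat.mem_properDivisors.mpr ⟨dvd_mul_right n p, by
      exact (Nat.lt_mul_iff_one_lt_right hn).mpr hplt⟩
  have hdvd0 := X_pow_sub_one_mul_cyclotomic_dvd_X_pow_sub_one_of_dvd ℤ hprop
  have hdvd : (m ^ n - 1) * v ∣ m ^ (n*p) - 1 := by
    have := eval_dvd (x := m) hdvd0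
    simpa using this
  set a := m ^ n with ha
  have hane : a ^ p - 1 ≠ 0 := by
    rw [sub_ne_zero, ha, ← pow_mul]
    exact hm
  have ha1 : a - 1 ≠ 0 := by
    intro h
    apply hane
    have : a = 1 := by omega
    rw [this]; ring
  have hdvd' : (a - 1) * v ∣ a ^ p - 1 := by
    rw [ha, ← pow_mul]
    exact hdvd
  by_cases hpa : (p:ℤ) ∣ a - 1
  · -- LTE case
    have hc' : Odd p ∨ (p = 2 ∧ IsSquare a) := by
      rcases hcase with h1 | ⟨h1, h2⟩
      · exact Or.inl h1
      · refine Or.inr ⟨h1, ?_⟩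
        obtain ⟨t, ht⟩ := h2
        exact ⟨m ^ t, by rw [ha, ht, pow_add]⟩
    have E := emult_pow_sub_one p hp hc' hpa
    have hchain : (p:ℤ)^2 * (a - 1) ∣ a ^ p - 1 := by
      obtain ⟨w, hw⟩ := hsq
      refine Dvd.dvd.trans ?_ hdvd'
      rw [hw]
      exact ⟨w, by ring⟩
    have hle : emultiplicity (p:ℤ) ((p:ℤ)^2 * (a-1)) ≤ emultiplicity (p:ℤ) (a ^ p - 1) :=
      emultiplicity_le_emultiplicity_of_dvd_right hchain
    rw [emultiplicity_mul (Nat.prime_iff_prime_int.mp hp), emultiplicity_pow_self_of_prime (Nat.prime_iff_prime_int.mp hp), E] at hle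
    have hfin : FiniteMultiplicity (p:ℤ) (a - 1) :=
      Int.finiteMultiplicity_iff.mpr ⟨by simpa using hp.ne_one, ha1⟩
    rw [hfin.emultiplicity_eq_multiplicity] at hle
    set c := multiplicity (p:ℤ) (a-1)
    have : ((2 + c : ℕ) : ℕ∞) ≤ ((c + 1 : ℕ) : ℕ∞) := by
      push_cast
      exact hle
    rw [Nat.cast_le] at this
    omega
  · -- Fermat case
    have hpv : (p:ℤ) ∣ v := (dvd_pow_self (p:ℤ) two_ne_zero).trans hsq
    have hfin : (p:ℤ) ∣ a ^ p - 1 := (hpv.mul_left (a-1)).trans hdvd'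
    exact fermat_not_dvd p hp hpa hfin

theorem stmt12 (k : ℕ) (hk : 2 < k) (p : ℕ) (hp : p.Prime)
    (h : (Odd p ∧ p ∣ k) ∨ (p = 2 ∧ 4 ∣ k)) :
    ∀ m : ℤ, padicValInt p ((cyclotomic k ℤ).eval m) ≤ 1 ∧
      ¬ (p : ℤ) ^ 2 ∣ (cyclotomic k ℤ).eval m := by
  intro m
  haveI := Fact.mk hp
  have hvpos : 0 < eval m (cyclotomic k ℤ) := cyclotomic_pos hk m
  have hk1 : k ≠ 1 := by omega
  suffices hnd : ¬ (p:ℤ)^2 ∣ (cyclotomic k ℤ).eval m by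
    refine ⟨?_, hnd⟩
    by_contra hle
    push_neg at hle
    exact hnd ((padicValInt_dvd_iff 2 _).mpr (Or.inr (by omega)))
  have hpk : p ∣ k := by
    rcases h with ⟨_, h1⟩ | ⟨rfl, h1⟩
    · exact h1
    · exact dvd_trans ⟨2, rfl⟩ h1
  obtain ⟨n, hkn⟩ := hpk
  have hkn' : k = n * p := by rw [hkn]; ring
  have hn0 : 0 < n := by
    rcases Nat.eq_zero_or_pos n with rfl | h'
    · simp at hkn'; omega
    · exact h'
  have hcase : Odd p ∨ (p = 2 ∧ Even n) := by
    rcases h with ⟨h1, _⟩ | ⟨rfl, h4⟩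
    · exact Or.inl h1
    · refine Or.inr ⟨rfl, ?_⟩
      obtain ⟨t, ht⟩ := h4
      rw [hkn'] at ht
      exact ⟨t, by omega⟩
  by_cases hm1 : m ^ k = 1
  · have hu : IsUnit m := IsUnit.of_pow_eq_one hm1 (by omega)
    rcases Int.isUnit_iff.mp hu with rfl | rfl
    · exact aux_eval_one p k hp hk1 dvd_rfl
    · have hkeven : Even k := by
        by_contra ho
        rw [Nat.not_even_iff_odd] at ho
        rw [ho.neg_one_pow] at hm1
        norm_num at hm1
      obtain ⟨d, hd⟩ := hkeven
      have hd2 : k = d * 2 := by omega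
      have hd1 : d ≠ 1 := by omega
      by_cases hdev : 2 ∣ d
      · apply aux_eval_one p d hp hd1
        have he := cyclotomic_expand_eq_cyclotomic Nat.prime_two hdev ℤ
        rw [hd2, ← he, expand_eval]
        norm_num
      · apply aux_eval_one p d hp hd1
        have he := congrArg (eval (-1)) (cyclotomic_expand_eq_cyclotomic_mul Nat.prime_two hdev ℤ)
        rw [expand_eval, eval_mul] at he
        norm_num at he
        rw [hd2]
        exact ⟨eval (-1) (cyclotomic d ℤ), he⟩
  · rw [hkn'] at hm1 ⊢
    exact key_lemma p hp n hn0 hcase m hm1
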